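/- arXiv:1712.05920 — 4 statements merged into one kernel-verified Lean document; each statement's English description precedes it below -/
import Mathlib

section
/- The set C_BSE(Δ(A)) of BSE-functions on Δ(A), equipped with pointwise operations, is a subalgebra of C_b(Δ(A)), and the BSE-norm ‖σ‖_BSE (the infimum of admissible constants C) is a complete algebra norm on it. -/
open WeakDual Filter

set_option linter.unusedSectionVars false
set_option linter.unusedVariables false
set_option maxHeartbeats 1000000

variable {A : Type*} [NonUnitalNormedCommRing A] [NormedSpace ℂ A]
  [IsScalarTower ℂ A A] [SMulCommClass ℂ A A] [CompleteSpace A]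

/-- The BSE inequality for a function on the character space of `A`. -/
def IsBSE (σ : WeakDual.characterSpace ℂ A → ℂ) : Prop :=
  ∃ C > (0 : ℝ), ∀ (n : ℕ) (φ : Fin n → WeakDual.characterSpace ℂ A) (c : Fin n → ℂ),
    ‖∑ i, c i * σ (φ i)‖ ≤
      C * ‖WeakDual.toStrongDual (∑ i, c i • ((φ i : WeakDual ℂ A)))‖

/-- The BSE norm: the infimum of admissible constants. -/
noncomputable def bseNorm (σ : WeakDual.characterSpace ℂ A → ℂ) : ℝ :=
  sInf {C : ℝ | 0 < C ∧ ∀ (n : ℕ) (φ : Fin n → WeakDual.characterSpace ℂ A) (c : Fin n → ℂ),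
    ‖∑ i, c i * σ (φ i)‖ ≤
      C * ‖WeakDual.toStrongDual (∑ i, c i • ((φ i : WeakDual ℂ A)))‖}

lemma bseSum_apply (n : ℕ) (φ : Fin n → characterSpace ℂ A) (c : Fin n → ℂ) (a : A) :
    (toStrongDual (∑ i, c i • (φ i : WeakDual ℂ A))) a = ∑ i, c i * φ i a := by
  rw [map_sum]
  simp only [ContinuousLinearMap.sum_apply, map_smul, ContinuousLinearMap.smul_apply]
  rfl

lemma bseNorm_nonneg (σ : characterSpace ℂ A → ℂ) : 0 ≤ bseNorm σ :=
  Real.sInf_nonneg fun _ hC => hC.1.le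

lemma bseNorm_bddBelow (σ : characterSpace ℂ A → ℂ) :
    BddBelow {C : ℝ | 0 < C ∧ ∀ (n : ℕ) (φ : Fin n → characterSpace ℂ A) (c : Fin n → ℂ),
      ‖∑ i, c i * σ (φ i)‖ ≤ C * ‖toStrongDual (∑ i, c i • ((φ i : WeakDual ℂ A)))‖} :=
  ⟨0, fun _ hC => hC.1.le⟩

lemma bseNorm_spec {σ : characterSpace ℂ A → ℂ} (h : IsBSE σ) (n : ℕ)
    (φ : Fin n → characterSpace ℂ A) (c : Fin n → ℂ) :
    ‖∑ i, c i * σ (φ i)‖ ≤ bseNorm σ * ‖toStrongDual (∑ i, c i • ((φ i : WeakDual ℂ A)))‖ := by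
  obtain ⟨C₀, hC₀, hb⟩ := h
  rcases eq_or_lt_of_le (norm_nonneg (toStrongDual (∑ i, c i • ((φ i : WeakDual ℂ A))))) with h0 | h0
  · have h1 := hb n φ c
    rw [← h0, mul_zero] at h1 ⊢
    exact h1
  · rw [← div_le_iff₀ h0]
    refine le_csInf ⟨C₀, hC₀, hb⟩ fun C hC => ?_
    rw [div_le_iff₀ h0]
    exact hC.2 n φ c

lemma bseNorm_le {σ : characterSpace ℂ A → ℂ} {B : ℝ} (hB : 0 ≤ B)
    (h : ∀ (n : ℕ) (φ : Fin n → characterSpace ℂ A) (c : Fin n → ℂ),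
      ‖∑ i, c i * σ (φ i)‖ ≤ B * ‖toStrongDual (∑ i, c i • ((φ i : WeakDual ℂ A)))‖) :
    bseNorm σ ≤ B := by
  refine le_of_forall_pos_le_add fun ε hε => ?_
  refine csInf_le (bseNorm_bddBelow σ) ⟨by linarith, fun n φ c => (h n φ c).trans ?_⟩
  have := norm_nonneg (toStrongDual (∑ i, c i • ((φ i : WeakDual ℂ A))))
  nlinarith

lemma isBSE_of_bound {σ : characterSpace ℂ A → ℂ} {B : ℝ}
    (h : ∀ (n : ℕ) (φ : Fin n → characterSpace ℂ A) (c : Fin n → ℂ),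
      ‖∑ i, c i * σ (φ i)‖ ≤ B * ‖toStrongDual (∑ i, c i • ((φ i : WeakDual ℂ A)))‖) :
    IsBSE σ := by
  refine ⟨|B| + 1, by positivity, fun n φ c => (h n φ c).trans ?_⟩
  have h1 := norm_nonneg (toStrongDual (∑ i, c i • ((φ i : WeakDual ℂ A))))
  have h2 : B ≤ |B| := le_abs_self B
  nlinarith

/-- iterated product `a^(n+1)` in a non-unital ring -/
def npow' (a : A) : ℕ → A
  | 0 => a
  | n + 1 => a * npow' a n

lemma char_npow' (φ : characterSpace ℂ A) (a : A) (n : ℕ) :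
    φ (npow' a n) = (φ a) ^ (n + 1) := by
  induction n with
  | zero => simp [npow']
  | succ n ih => rw [npow', map_mul, ih]; ring

lemma norm_npow'_le (a : A) (n : ℕ) : ‖npow' a n‖ ≤ ‖a‖ ^ (n + 1) := by
  induction n with
  | zero => simp [npow']
  | succ n ih =>
    calc ‖npow' a (n+1)‖ ≤ ‖a‖ * ‖npow' a n‖ := norm_mul_le _ _
    _ ≤ ‖a‖ * ‖a‖ ^ (n + 1) := by
        exact mul_le_mul_of_nonneg_left ih (norm_nonneg a)
    _ = ‖a‖ ^ (n + 2) := by ring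

lemma char_apply_le (φ : characterSpace ℂ A) (a : A) : ‖φ a‖ ≤ ‖a‖ := by
  set M := ‖toStrongDual (φ : WeakDual ℂ A)‖ with hM
  have hMn : 0 ≤ M := norm_nonneg _
  have key : ∀ n : ℕ, ‖φ a‖ ^ (n + 1) ≤ M * ‖a‖ ^ (n + 1) := by
    intro n
    calc ‖φ a‖ ^ (n + 1) = ‖φ (npow' a n)‖ := by rw [char_npow' φ a n, norm_pow]
    _ ≤ M * ‖npow' a n‖ := (toStrongDual (φ : WeakDual ℂ A)).le_opNorm _
    _ ≤ M * ‖a‖ ^ (n + 1) := mul_le_mul_of_nonneg_left (norm_npow'_le a n) hMn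
  by_contra hc
  push_neg at hc
  have ha : 0 ≤ ‖a‖ := norm_nonneg a
  rcases eq_or_lt_of_le ha with h0 | h0
  · have h1 := key 0
    rw [pow_one, pow_one, ← h0, mul_zero] at h1
    nlinarith
  · have ht : 1 < ‖φ a‖ / ‖a‖ := (one_lt_div h0).mpr hc
    obtain ⟨n, hn⟩ := pow_unbounded_of_one_lt M ht
    have h1 : (‖φ a‖ / ‖a‖) ^ (n + 1) ≤ M := by
      rw [div_pow, div_le_iff₀ (pow_pos h0 _)]
      exact key n
    have h2 : (‖φ a‖ / ‖a‖) ^ n ≤ (‖φ a‖ / ‖a‖) ^ (n + 1) :=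
      pow_le_pow_right₀ ht.le (Nat.le_succ n)
    linarith

lemma char_norm_le_one (φ : characterSpace ℂ A) :
    ‖toStrongDual (φ : WeakDual ℂ A)‖ ≤ 1 :=
  ContinuousLinearMap.opNorm_le_bound _ zero_le_one fun a => by
    rw [one_mul]; exact char_apply_le φ a

lemma key_mul {τ : characterSpace ℂ A → ℂ} (hτ : IsBSE τ) (n : ℕ)
    (φ : Fin n → characterSpace ℂ A) (c : Fin n → ℂ) :
    ‖toStrongDual (∑ i, (c i * τ (φ i)) • (φ i : WeakDual ℂ A))‖ ≤
      bseNorm τ * ‖toStrongDual (∑ i, c i • (φ i : WeakDual ℂ A))‖ := by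
  set N := ‖toStrongDual (∑ i, c i • (φ i : WeakDual ℂ A))‖ with hN
  have hN0 : 0 ≤ N := norm_nonneg _
  refine ContinuousLinearMap.opNorm_le_bound _ (mul_nonneg (bseNorm_nonneg τ) hN0) fun a => ?_
  rw [bseSum_apply]
  have h1 : ∑ i, (c i * τ (φ i)) * φ i a = ∑ i, (c i * φ i a) * τ (φ i) := by
    apply Finset.sum_congr rfl; intros; ring
  rw [h1]
  calc ‖∑ i, (c i * φ i a) * τ (φ i)‖
      ≤ bseNorm τ * ‖toStrongDual (∑ i, (c i * φ i a) • (φ i : WeakDual ℂ A))‖ :=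
        bseNorm_spec hτ n φ _
    _ ≤ bseNorm τ * (N * ‖a‖) := by
        refine mul_le_mul_of_nonneg_left ?_ (bseNorm_nonneg τ)
        refine ContinuousLinearMap.opNorm_le_bound _ (mul_nonneg hN0 (norm_nonneg a)) fun b => ?_
        rw [bseSum_apply]
        have h2 : ∑ i, (c i * φ i a) * φ i b = ∑ i, c i * φ i (a * b) := by
          apply Finset.sum_congr rfl
          intros i _
          rw [map_mul]; ring
        rw [h2, ← bseSum_apply n φ c (a * b)]
        calc ‖toStrongDual (∑ i, c i • (φ i : WeakDual ℂ A)) (a * b)‖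
            ≤ N * ‖a * b‖ := (toStrongDual (∑ i, c i • (φ i : WeakDual ℂ A))).le_opNorm _
          _ ≤ N * (‖a‖ * ‖b‖) := mul_le_mul_of_nonneg_left (norm_mul_le a b) hN0
          _ = N * ‖a‖ * ‖b‖ := by ring
    _ = bseNorm τ * N * ‖a‖ := by ring

lemma isBSE_zero : IsBSE (0 : characterSpace ℂ A → ℂ) :=
  ⟨1, one_pos, fun n φ c => by simp [norm_nonneg]⟩

lemma bseNorm_zero : bseNorm (0 : characterSpace ℂ A → ℂ) = 0 :=
  le_antisymm (bseNorm_le le_rfl fun n φ c => by simp) (bseNorm_nonneg _)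

lemma bseAdd_bound {σ τ : characterSpace ℂ A → ℂ} (hσ : IsBSE σ) (hτ : IsBSE τ)
    (n : ℕ) (φ : Fin n → characterSpace ℂ A) (c : Fin n → ℂ) :
    ‖∑ i, c i * (σ + τ) (φ i)‖ ≤
      (bseNorm σ + bseNorm τ) * ‖toStrongDual (∑ i, c i • (φ i : WeakDual ℂ A))‖ := by
  have h1 : ∑ i, c i * (σ + τ) (φ i) = (∑ i, c i * σ (φ i)) + ∑ i, c i * τ (φ i) := by
    rw [← Finset.sum_add_distrib]
    apply Finset.sum_congr rfl
    intros; simp [Pi.add_apply]; ring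
  rw [h1, add_mul]
  exact (norm_add_le _ _).trans (add_le_add (bseNorm_spec hσ n φ c) (bseNorm_spec hτ n φ c))

lemma isBSE_add {σ τ : characterSpace ℂ A → ℂ} (hσ : IsBSE σ) (hτ : IsBSE τ) :
    IsBSE (σ + τ) := isBSE_of_bound (bseAdd_bound hσ hτ)

lemma bseNorm_add_le {σ τ : characterSpace ℂ A → ℂ} (hσ : IsBSE σ) (hτ : IsBSE τ) :
    bseNorm (σ + τ) ≤ bseNorm σ + bseNorm τ :=
  bseNorm_le (add_nonneg (bseNorm_nonneg σ) (bseNorm_nonneg τ)) (bseAdd_bound hσ hτ)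

lemma bseSmul_bound {σ : characterSpace ℂ A → ℂ} (hσ : IsBSE σ) (r : ℂ)
    (n : ℕ) (φ : Fin n → characterSpace ℂ A) (c : Fin n → ℂ) :
    ‖∑ i, c i * (r • σ) (φ i)‖ ≤
      (‖r‖ * bseNorm σ) * ‖toStrongDual (∑ i, c i • (φ i : WeakDual ℂ A))‖ := by
  have h1 : ∑ i, c i * (r • σ) (φ i) = r * ∑ i, c i * σ (φ i) := by
    rw [Finset.mul_sum]
    apply Finset.sum_congr rfl
    intros; simp [Pi.smul_apply, smul_eq_mul]; ring
  rw [h1, norm_mul, mul_assoc]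
  exact mul_le_mul_of_nonneg_left (bseNorm_spec hσ n φ c) (norm_nonneg r)

lemma isBSE_smul {σ : characterSpace ℂ A → ℂ} (hσ : IsBSE σ) (r : ℂ) :
    IsBSE (r • σ) := isBSE_of_bound (bseSmul_bound hσ r)

lemma bseNorm_smul_le {σ : characterSpace ℂ A → ℂ} (hσ : IsBSE σ) (r : ℂ) :
    bseNorm (r • σ) ≤ ‖r‖ * bseNorm σ :=
  bseNorm_le (mul_nonneg (norm_nonneg r) (bseNorm_nonneg σ)) (bseSmul_bound hσ r)

lemma bseNorm_smul {σ : characterSpace ℂ A → ℂ} (hσ : IsBSE σ) (r : ℂ) :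
    bseNorm (r • σ) = ‖r‖ * bseNorm σ := by
  rcases eq_or_ne r 0 with rfl | hr
  · rw [zero_smul, bseNorm_zero, norm_zero, zero_mul]
  · refine le_antisymm (bseNorm_smul_le hσ r) ?_
    have h1 : bseNorm (r⁻¹ • (r • σ)) ≤ ‖r⁻¹‖ * bseNorm (r • σ) :=
      bseNorm_smul_le (isBSE_smul hσ r) r⁻¹
    rw [smul_smul, inv_mul_cancel₀ hr, one_smul] at h1
    have h2 : ‖r‖ * bseNorm σ ≤ ‖r‖ * (‖r⁻¹‖ * bseNorm (r • σ)) :=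
      mul_le_mul_of_nonneg_left h1 (norm_nonneg r)
    rwa [← mul_assoc, ← norm_mul, mul_inv_cancel₀ hr, norm_one, one_mul] at h2

lemma bseMul_bound {σ τ : characterSpace ℂ A → ℂ} (hσ : IsBSE σ) (hτ : IsBSE τ)
    (n : ℕ) (φ : Fin n → characterSpace ℂ A) (c : Fin n → ℂ) :
    ‖∑ i, c i * (σ * τ) (φ i)‖ ≤
      (bseNorm σ * bseNorm τ) * ‖toStrongDual (∑ i, c i • (φ i : WeakDual ℂ A))‖ := by
  have h1 : ∑ i, c i * (σ * τ) (φ i) = ∑ i, (c i * τ (φ i)) * σ (φ i) := by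
    apply Finset.sum_congr rfl
    intros; simp [Pi.mul_apply]; ring
  rw [h1]
  calc ‖∑ i, (c i * τ (φ i)) * σ (φ i)‖
      ≤ bseNorm σ * ‖toStrongDual (∑ i, (c i * τ (φ i)) • (φ i : WeakDual ℂ A))‖ :=
        bseNorm_spec hσ n φ _
    _ ≤ bseNorm σ * (bseNorm τ * ‖toStrongDual (∑ i, c i • (φ i : WeakDual ℂ A))‖) :=
        mul_le_mul_of_nonneg_left (key_mul hτ n φ c) (bseNorm_nonneg σ)
    _ = _ := by ring

lemma isBSE_mul {σ τ : characterSpace ℂ A → ℂ} (hσ : IsBSE σ) (hτ : IsBSE τ) :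
    IsBSE (σ * τ) := isBSE_of_bound (bseMul_bound hσ hτ)

lemma bseNorm_mul_le {σ τ : characterSpace ℂ A → ℂ} (hσ : IsBSE σ) (hτ : IsBSE τ) :
    bseNorm (σ * τ) ≤ bseNorm σ * bseNorm τ :=
  bseNorm_le (mul_nonneg (bseNorm_nonneg σ) (bseNorm_nonneg τ)) (bseMul_bound hσ hτ)

lemma norm_le_bseNorm (σ : BoundedContinuousFunction (characterSpace ℂ A) ℂ)
    (hσ : IsBSE ⇑σ) : ‖σ‖ ≤ bseNorm ⇑σ := by
  rw [BoundedContinuousFunction.norm_le (bseNorm_nonneg _)]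
  intro φ
  have h1 := bseNorm_spec hσ 1 (fun _ => φ) (fun _ => 1)
  simp only [Fin.sum_univ_one, one_mul, one_smul] at h1
  calc ‖σ φ‖ ≤ bseNorm ⇑σ * ‖toStrongDual (φ : WeakDual ℂ A)‖ := h1
    _ ≤ bseNorm ⇑σ * 1 := mul_le_mul_of_nonneg_left (char_norm_le_one φ) (bseNorm_nonneg _)
    _ = bseNorm ⇑σ := mul_one _

/-- the BSE-functions form a (non-unital) subalgebra of
`C_b(Δ(A))`, and the BSE-norm is a complete algebra norm on this subalgebra. -/
theorem bse_subalgebra_and_complete_algebra_norm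
    (hss : ∀ a : A, (∀ φ : WeakDual.characterSpace ℂ A, φ a = 0) → a = 0) :
    (∃ S : NonUnitalSubalgebra ℂ
        (BoundedContinuousFunction (WeakDual.characterSpace ℂ A) ℂ),
      (S : Set (BoundedContinuousFunction (WeakDual.characterSpace ℂ A) ℂ)) =
        {σ : BoundedContinuousFunction (WeakDual.characterSpace ℂ A) ℂ | IsBSE (⇑σ)}) ∧
    (∀ σ : BoundedContinuousFunction (WeakDual.characterSpace ℂ A) ℂ,
      IsBSE (⇑σ) → 0 ≤ bseNorm (⇑σ)) ∧
    (∀ σ : BoundedContinuousFunction (WeakDual.characterSpace ℂ A) ℂ,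
      IsBSE (⇑σ) → (bseNorm (⇑σ) = 0 ↔ σ = 0)) ∧
    (∀ σ τ : BoundedContinuousFunction (WeakDual.characterSpace ℂ A) ℂ,
      IsBSE (⇑σ) → IsBSE (⇑τ) → bseNorm (⇑(σ + τ)) ≤ bseNorm (⇑σ) + bseNorm (⇑τ)) ∧
    (∀ (c : ℂ) (σ : BoundedContinuousFunction (WeakDual.characterSpace ℂ A) ℂ),
      IsBSE (⇑σ) → bseNorm (⇑(c • σ)) = ‖c‖ * bseNorm (⇑σ)) ∧
    (∀ σ τ : BoundedContinuousFunction (WeakDual.characterSpace ℂ A) ℂ,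
      IsBSE (⇑σ) → IsBSE (⇑τ) → bseNorm (⇑(σ * τ)) ≤ bseNorm (⇑σ) * bseNorm (⇑τ)) ∧
    (∀ f : ℕ → BoundedContinuousFunction (WeakDual.characterSpace ℂ A) ℂ,
      (∀ n, IsBSE (⇑(f n))) →
      (∀ ε > (0 : ℝ), ∃ N : ℕ, ∀ m ≥ N, ∀ n ≥ N, bseNorm (⇑(f m - f n)) < ε) →
      ∃ g : BoundedContinuousFunction (WeakDual.characterSpace ℂ A) ℂ, IsBSE (⇑g) ∧
        Tendsto (fun n => bseNorm (⇑(f n - g))) atTop (nhds 0)) := by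
  refine ⟨?_, fun σ _ => bseNorm_nonneg _, ?_, ?_, ?_, ?_, ?_⟩
  · refine ⟨{ carrier := {σ | IsBSE (⇑σ)}
              add_mem' := fun {σ} {τ} hσ hτ => by
                show IsBSE ⇑(σ + τ)
                rw [BoundedContinuousFunction.coe_add]
                exact isBSE_add hσ hτ
              zero_mem' := by
                show IsBSE ⇑(0 : BoundedContinuousFunction (characterSpace ℂ A) ℂ)
                rw [BoundedContinuousFunction.coe_zero]
                exact isBSE_zero
              mul_mem' := fun {σ} {τ} hσ hτ => by
                show IsBSE ⇑(σ * τ)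
                rw [BoundedContinuousFunction.coe_mul]
                exact isBSE_mul hσ hτ
              smul_mem' := fun r σ hσ => by
                show IsBSE ⇑(r • σ)
                rw [BoundedContinuousFunction.coe_smul]
                exact isBSE_smul hσ r }, rfl⟩
  · intro σ hσ
    constructor
    · intro h
      have h1 := norm_le_bseNorm σ hσ
      rw [h] at h1
      exact norm_le_zero_iff.mp h1
    · rintro rfl
      rw [BoundedContinuousFunction.coe_zero]
      exact bseNorm_zero
  · intro σ τ hσ hτ
    rw [BoundedContinuousFunction.coe_add]
    exact bseNorm_add_le hσ hτ
  · intro c σ hσ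
    rw [BoundedContinuousFunction.coe_smul]
    exact bseNorm_smul hσ c
  · intro σ τ hσ hτ
    rw [BoundedContinuousFunction.coe_mul]
    exact bseNorm_mul_le hσ hτ
  · intro f hf hC
    have hsub : ∀ m n, IsBSE ⇑(f m - f n) := by
      intro m n
      have h1 : ⇑(f m - f n) = ⇑(f m) + (-1 : ℂ) • ⇑(f n) := by
        ext x; simp [sub_eq_add_neg]
      rw [h1]
      exact isBSE_add (hf m) (isBSE_smul (hf n) (-1))
    have hcauchy : CauchySeq f := by
      rw [Metric.cauchySeq_iff]
      intro ε hε
      obtain ⟨N, hN⟩ := hC ε hε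
      exact ⟨N, fun m hm n hn =>
        (dist_eq_norm (f m) (f n) ▸ (norm_le_bseNorm _ (hsub m n))).trans_lt (hN m hm n hn)⟩
    obtain ⟨g, hg⟩ := cauchySeq_tendsto_of_complete hcauchy
    have hnorm0 : Tendsto (fun n => ‖f n - g‖) atTop (nhds 0) := by
      rw [← tendsto_iff_norm_sub_tendsto_zero]
      exact hg
    have hpt : ∀ φ, Tendsto (fun n => f n φ) atTop (nhds (g φ)) := by
      intro φ
      rw [tendsto_iff_norm_sub_tendsto_zero]
      refine squeeze_zero (fun n => norm_nonneg _) (fun n => ?_) hnorm0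
      exact ((f n - g).norm_coe_le_norm φ)
    obtain ⟨N, hN⟩ := hC 1 one_pos
    have hbnd : ∀ m, m ≥ N → bseNorm ⇑(f m) ≤ bseNorm ⇑(f N) + 1 := by
      intro m hm
      have h1 : ⇑(f m) = ⇑(f N) + ⇑(f m - f N) := by ext x; simp
      rw [h1]
      have h2 := bseNorm_add_le (hf N) (hsub m N)
      have h3 := (hN m hm N le_rfl).le
      linarith
    have hgB : ∀ (k : ℕ) (φs : Fin k → characterSpace ℂ A) (c : Fin k → ℂ),
        ‖∑ i, c i * g (φs i)‖ ≤ (bseNorm ⇑(f N) + 1) *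
          ‖toStrongDual (∑ i, c i • (φs i : WeakDual ℂ A))‖ := by
      intro k φs c
      have ht : Tendsto (fun m => ∑ i, c i * f m (φs i)) atTop
          (nhds (∑ i, c i * g (φs i))) :=
        tendsto_finset_sum _ fun i _ => (hpt (φs i)).const_mul (c i)
      refine le_of_tendsto ht.norm ?_
      filter_upwards [eventually_ge_atTop N] with m hm
      exact (bseNorm_spec (hf m) k φs c).trans
        (mul_le_mul_of_nonneg_right (hbnd m hm) (norm_nonneg _))
    refine ⟨g, isBSE_of_bound hgB, ?_⟩
    rw [Metric.tendsto_atTop]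
    intro ε hε
    obtain ⟨M, hM⟩ := hC (ε/2) (by linarith)
    refine ⟨M, fun n hn => ?_⟩
    have hle : bseNorm ⇑(f n - g) ≤ ε/2 := by
      refine bseNorm_le (by linarith) fun k φs c => ?_
      have ht : Tendsto (fun m => ∑ i, c i * (f n - f m) (φs i)) atTop
          (nhds (∑ i, c i * (f n - g) (φs i))) := by
        apply tendsto_finset_sum
        intro i _
        have h1 : Tendsto (fun m => f n (φs i) - f m (φs i)) atTop
            (nhds (f n (φs i) - g (φs i))) := tendsto_const_nhds.sub (hpt (φs i))
        have h2 := h1.const_mul (c i)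
        simpa using h2
      refine le_of_tendsto ht.norm ?_
      filter_upwards [eventually_ge_atTop M] with m hm
      exact (bseNorm_spec (hsub n m) k φs c).trans
        (mul_le_mul_of_nonneg_right (hM n hn m hm).le (norm_nonneg _))
    rw [Real.dist_eq, sub_zero, abs_of_nonneg (bseNorm_nonneg _)]
    linarith
end

section
/- (Helly's theorem) Let X be a complex normed space, x₁*,...,xₙ* ∈ X*, c₁,...,cₙ ∈ ℂ, and M > 0. Then the following are equivalent: (1) for every ε > 0 there exists x_ε ∈ X with ‖x_ε‖ ≤ M + ε and x_k*(x_ε) = c_k for k = 1,...,n; (2) for all a₁,...,aₙ ∈ ℂ, |Σ aᵢcᵢ| ≤ M‖Σ aᵢxᵢ*‖_{X*}. -/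
/-- Helly's theorem: for a complex normed space `X`, functionals
`x₁*, …, xₙ*`, scalars `c₁, …, cₙ` and `M > 0`, the following are equivalent:
(1) for every `ε > 0` there is `x_ε` with `‖x_ε‖ ≤ M + ε` and `xₖ*(x_ε) = cₖ` for all `k`;
(2) `|∑ aᵢ cᵢ| ≤ M ‖∑ aᵢ xᵢ*‖` for all scalars `a₁, …, aₙ`. -/
theorem helly {X : Type*} [NormedAddCommGroup X] [NormedSpace ℂ X]
    {n : ℕ} (x : Fin n → StrongDual ℂ X) (c : Fin n → ℂ) (M : ℝ) (hM : 0 < M) :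
    (∀ ε > (0 : ℝ), ∃ xε : X, ‖xε‖ ≤ M + ε ∧ ∀ k, x k xε = c k) ↔
      (∀ a : Fin n → ℂ, ‖∑ i, a i * c i‖ ≤ M * ‖∑ i, a i • x i‖) := by
  constructor
  · -- easy direction
    intro h1 a
    set F : X →L[ℂ] ℂ := ∑ i, a i • x i with hF
    refine le_of_forall_pos_le_add fun δ hδ => ?_
    have hε : (0 : ℝ) < δ / (‖F‖ + 1) :=
      div_pos hδ (by positivity)
    obtain ⟨xε, hxε, hxk⟩ := h1 _ hε
    have hsum : ∑ i, a i * c i = F xε := by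
      simp only [hF, ContinuousLinearMap.sum_apply, ContinuousLinearMap.smul_apply,
        smul_eq_mul]
      exact Finset.sum_congr rfl fun i _ => by rw [hxk i]
    have hεF : δ / (‖F‖ + 1) * ‖F‖ ≤ δ := by
      rw [div_mul_eq_mul_div, div_le_iff₀ (by positivity)]
      nlinarith [norm_nonneg F]
    calc ‖∑ i, a i * c i‖ = ‖F xε‖ := by rw [hsum]
      _ ≤ ‖F‖ * ‖xε‖ := F.le_opNorm xε
      _ ≤ ‖F‖ * (M + δ / (‖F‖ + 1)) :=
          mul_le_mul_of_nonneg_left hxε (norm_nonneg F)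
      _ = M * ‖F‖ + δ / (‖F‖ + 1) * ‖F‖ := by ring
      _ ≤ M * ‖F‖ + δ := by linarith
  · -- hard direction
    intro h ε hε
    set T : X →L[ℂ] (Fin n → ℂ) := ContinuousLinearMap.pi x with hT
    -- Step A: `c` is in the range of `T`
    have hc : c ∈ LinearMap.range (T : X →ₗ[ℂ] (Fin n → ℂ)) := by
      by_contra hc
      obtain ⟨f, hfc, hf⟩ :=
        Submodule.exists_dual_map_eq_bot_of_notMem hc inferInstance
      set a : Fin n → ℂ := fun i => f (Pi.single i 1) with ha
      have key : ∀ v : Fin n → ℂ, f v = ∑ i, v i * a i := by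
        intro v
        conv_lhs => rw [← Finset.univ_sum_single v]
        rw [map_sum]
        refine Finset.sum_congr rfl fun i _ => ?_
        have : Pi.single i (v i) = v i • (Pi.single i (1 : ℂ) : Fin n → ℂ) := by
          rw [← Pi.single_smul, smul_eq_mul, mul_one]
        rw [this, map_smul, smul_eq_mul]
      have hfT : ∀ y : X, f (T y) = 0 := by
        intro y
        have : f (T y) ∈ (LinearMap.range (T : X →ₗ[ℂ] (Fin n → ℂ))).map f :=
          Submodule.mem_map_of_mem (LinearMap.mem_range_self (T : X →ₗ[ℂ] (Fin n → ℂ)) y)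
        rw [hf] at this
        exact this
      have hzero : (∑ i, a i • x i : X →L[ℂ] ℂ) = 0 := by
        ext y
        have := hfT y
        rw [key] at this
        simp only [ContinuousLinearMap.sum_apply, ContinuousLinearMap.smul_apply,
          smul_eq_mul, ContinuousLinearMap.zero_apply]
        rw [← this]
        refine Finset.sum_congr rfl fun i _ => ?_
        rw [mul_comm]
        congr 1
      have hac : ∑ i, a i * c i = f c := by
        rw [key c]
        exact Finset.sum_congr rfl fun i _ => mul_comm _ _
      have := h a
      rw [hac, hzero, norm_zero, mul_zero] at this
      exact hfc (norm_le_zero_iff.mp this)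
    obtain ⟨x₀, hx₀⟩ := hc
    set N : Submodule ℂ X := LinearMap.ker (T : X →ₗ[ℂ] (Fin n → ℂ)) with hN
    haveI : IsClosed (N : Set X) := ContinuousLinearMap.isClosed_ker T
    -- Step B: the norm of `x₀` in the quotient is at most `M`
    have hle : ‖(Submodule.Quotient.mk x₀ : X ⧸ N)‖ ≤ M := by
      by_contra hgt
      push_neg at hgt
      have hne : (Submodule.Quotient.mk x₀ : X ⧸ N) ≠ 0 := by
        intro h0
        rw [h0, norm_zero] at hgt
        linarith
      obtain ⟨g, hg1, hgx⟩ := exists_dual_vector ℂ _ (norm_ne_zero_iff.mpr hne)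
      set mkC : X →L[ℂ] (X ⧸ N) :=
        LinearMap.mkContinuous N.mkQ 1
          (fun m => by simpa using Submodule.Quotient.norm_mk_le N m) with hmkC
      have hmkC_apply : ∀ y : X, mkC y = Submodule.Quotient.mk y := fun y => rfl
      set f : X →L[ℂ] ℂ := g.comp mkC with hfdef
      have hfnorm : ‖f‖ ≤ 1 := by
        refine ContinuousLinearMap.opNorm_le_bound f zero_le_one fun y => ?_
        calc ‖f y‖ = ‖g (mkC y)‖ := rfl
          _ ≤ ‖g‖ * ‖mkC y‖ := g.le_opNorm _
          _ = ‖(Submodule.Quotient.mk y : X ⧸ N)‖ := by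
              rw [hg1, one_mul, hmkC_apply]
          _ ≤ ‖y‖ := Submodule.Quotient.norm_mk_le N y
          _ = 1 * ‖y‖ := (one_mul _).symm
      -- Step C: `f` is a linear combination of the `x i`
      have hker : ⨅ i, LinearMap.ker ((x i : X →ₗ[ℂ] ℂ)) ≤
          LinearMap.ker (f : X →ₗ[ℂ] ℂ) := by
        intro y hy
        simp only [Submodule.mem_iInf, LinearMap.mem_ker,
          ContinuousLinearMap.coe_coe] at hy ⊢
        have hyN : y ∈ N := by
          rw [hN, LinearMap.mem_ker]
          ext i
          exact hy i
        show f y = 0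
        rw [hfdef]
        have : mkC y = 0 := by
          rw [hmkC_apply, Submodule.Quotient.mk_eq_zero]
          exact hyN
        simp [ContinuousLinearMap.comp_apply, this]
      obtain ⟨a, haf⟩ := (Submodule.mem_span_range_iff_exists_fun ℂ).mp
        (mem_span_of_iInf_ker_le_ker hker)
      have hfeq : (∑ i, a i • x i : X →L[ℂ] ℂ) = f := by
        apply ContinuousLinearMap.coe_injective
        rw [← haf]
        simp only [ContinuousLinearMap.coe_sum, ContinuousLinearMap.coe_smul]
      have hxc : ∀ i, x i x₀ = c i := by
        intro i
        have := congr_fun hx₀ i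
        simpa [hT] using this
      have hfx₀ : f x₀ = (‖(Submodule.Quotient.mk x₀ : X ⧸ N)‖ : ℂ) := by
        rw [hfdef]
        simpa [ContinuousLinearMap.comp_apply, hmkC_apply] using hgx
      have hsum : ∑ i, a i * c i = f x₀ := by
        rw [← hfeq]
        simp only [ContinuousLinearMap.sum_apply, ContinuousLinearMap.smul_apply,
          smul_eq_mul]
        exact Finset.sum_congr rfl fun i _ => by rw [hxc i]
      have := h a
      rw [hsum, hfx₀, hfeq] at this
      have hnorm : ‖((‖(Submodule.Quotient.mk x₀ : X ⧸ N)‖ : ℝ) : ℂ)‖ =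
          ‖(Submodule.Quotient.mk x₀ : X ⧸ N)‖ := by
        rw [Complex.norm_real, Real.norm_of_nonneg (norm_nonneg _)]
      rw [hnorm] at this
      have : ‖(Submodule.Quotient.mk x₀ : X ⧸ N)‖ ≤ M * 1 :=
        this.trans (mul_le_mul_of_nonneg_left hfnorm hM.le)
      rw [mul_one] at this
      linarith
    -- conclude
    obtain ⟨m, hm_eq, hm_lt⟩ :=
      Submodule.Quotient.norm_mk_lt (Submodule.Quotient.mk x₀ : X ⧸ N) hε
    refine ⟨m, le_trans hm_lt.le (by linarith), fun k => ?_⟩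
    have hmem : m - x₀ ∈ N := (Submodule.Quotient.eq N).mp hm_eq
    have hTm : T m = T x₀ := by
      have : T (m - x₀) = 0 := hmem
      rw [map_sub, sub_eq_zero] at this
      exact this
    have hTmc : T m = c := hTm.trans hx₀
    have : (T m) k = c k := congr_fun hTmc k
    simpa [hT] using this
end

section
/- If B is a Banach algebra containing a Banach algebra C as a two-sided ideal, then every character φ ∈ Δ(C) extends to a character φ̃ ∈ Δ(B). -/
/-- if a Banach algebra `B` contains a Banach algebra `C` as a two-sided
ideal, then every character of `C` extends to a character of `B`. -/
theorem character_extends_from_ideal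
    {B : Type*} [NormedRing B] [NormedAlgebra ℂ B] [CompleteSpace B]
    (C : NonUnitalSubalgebra ℂ B)
    (hIdeal : ∀ b : B, ∀ c ∈ C, b * c ∈ C ∧ c * b ∈ C)
    (φ : C →ₗ[ℂ] ℂ) (hφmul : ∀ x y : C, φ (x * y) = φ x * φ y) (hφne : φ ≠ 0) :
    ∃ ψ : B →ₗ[ℂ] ℂ, (∀ x y : B, ψ (x * y) = ψ x * ψ y) ∧ ψ ≠ 0 ∧
      ∀ c : C, ψ (c : B) = φ c := by
  -- find c₀ ∈ C with φ c₀ = 1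
  obtain ⟨c, hc⟩ : ∃ c : C, φ c ≠ 0 := by
    by_contra h
    push_neg at h
    exact hφne (LinearMap.ext fun x => h x)
  set c₀ : C := (φ c)⁻¹ • c with hc₀def
  have hφc₀ : φ c₀ = 1 := by
    simp [hc₀def, map_smul, inv_mul_cancel₀ hc]
  -- define ψ b = φ (b * c₀)
  let ψ : B →ₗ[ℂ] ℂ :=
    { toFun := fun b => φ ⟨b * (c₀ : B), (hIdeal b c₀ c₀.2).1⟩
      map_add' := by
        intro a b
        have : (⟨(a + b) * (c₀ : B), (hIdeal _ c₀ c₀.2).1⟩ : C) =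
            ⟨a * (c₀ : B), (hIdeal a c₀ c₀.2).1⟩ + ⟨b * (c₀ : B), (hIdeal b c₀ c₀.2).1⟩ := by
          ext; simp [add_mul]
        rw [this, map_add]
      map_smul' := by
        intro m a
        have : (⟨(m • a) * (c₀ : B), (hIdeal _ c₀ c₀.2).1⟩ : C) =
            m • ⟨a * (c₀ : B), (hIdeal a c₀ c₀.2).1⟩ := by
          ext; simp [smul_mul_assoc]
        rw [this, map_smul]
        rfl }
  have hψ : ∀ b : B, ψ b = φ ⟨b * (c₀ : B), (hIdeal b c₀ c₀.2).1⟩ := fun b => rfl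
  -- key lemma: if z ∈ C and φ z = 0 then φ (b * z) = 0 for all b : B
  have key : ∀ (b : B) (z : C), φ z = 0 →
      φ ⟨b * (z : B), (hIdeal b z z.2).1⟩ = 0 := by
    intro b z hz
    have h1 : (⟨b * (z : B), (hIdeal b z z.2).1⟩ : C) =
        (⟨(c₀ : B) * b, (hIdeal b c₀ c₀.2).2⟩ : C) * z +
          ((⟨b * (z : B), (hIdeal b z z.2).1⟩ : C) -
            c₀ * ⟨b * (z : B), (hIdeal b z z.2).1⟩) := by
      ext
      push_cast
      noncomm_ring
    rw [h1, map_add, map_sub, hφmul, hφmul, hz, hφc₀]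
    ring
  refine ⟨ψ, ?_, ?_, ?_⟩
  · -- multiplicative
    intro x y
    have hz : φ ((⟨y * (c₀ : B), (hIdeal y c₀ c₀.2).1⟩ : C) -
        c₀ * ⟨y * (c₀ : B), (hIdeal y c₀ c₀.2).1⟩) = 0 := by
      rw [map_sub, hφmul, hφc₀, one_mul, sub_self]
    have hxz := key x _ hz
    have hsplit : (⟨(x * y) * (c₀ : B), (hIdeal _ c₀ c₀.2).1⟩ : C) =
        (⟨x * (c₀ : B), (hIdeal x c₀ c₀.2).1⟩ : C) *
          ⟨y * (c₀ : B), (hIdeal y c₀ c₀.2).1⟩ +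
        ⟨x * (((⟨y * (c₀ : B), (hIdeal y c₀ c₀.2).1⟩ : C) -
            c₀ * ⟨y * (c₀ : B), (hIdeal y c₀ c₀.2).1⟩ : C) : B),
          (hIdeal x _ (Subtype.mem _)).1⟩ := by
      ext
      push_cast
      noncomm_ring
    rw [hψ, hψ, hψ, hsplit, map_add, hφmul, hxz, add_zero]
  · -- nonzero
    intro h0
    have : ψ (c₀ : B) = 0 := by rw [h0]; rfl
    rw [hψ] at this
    have heq : (⟨(c₀ : B) * (c₀ : B), (hIdeal _ c₀ c₀.2).1⟩ : C) = c₀ * c₀ := rfl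
    rw [heq, hφmul, hφc₀, one_mul] at this
    exact one_ne_zero this
  · -- extension
    intro d
    rw [hψ]
    have heq : (⟨(d : B) * (c₀ : B), (hIdeal _ c₀ c₀.2).1⟩ : C) = d * c₀ := rfl
    rw [heq, hφmul, hφc₀, mul_one]
end

section
/- If A has a bounded weak approximate identity and C_BSE(Δ(A)) is a two-sided ideal of C_b(Δ(A)), then Δ(C_BSE(Δ(A))) equals the weak-* closure of Δ(A) in A*. -/
open WeakDual Filter

variable {A : Type*} [NonUnitalNormedCommRing A] [NormedSpace ℂ A]
  [IsScalarTower ℂ A A] [SMulCommClass ℂ A A] [CompleteSpace A]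

variable (A) in
/-- The space `C_BSE(Δ(A))` of BSE-functions, as a subtype of `C_b(Δ(A))`. -/
abbrev BSEfun :=
  {σ : BoundedContinuousFunction (WeakDual.characterSpace ℂ A) ℂ // IsBSE (⇑σ)}

/-- A character of `C_BSE(Δ(A))`: a nonzero multiplicative linear functional on the
BSE-functions which is bounded with respect to the BSE norm. -/
def IsBSECharacter (χ : BSEfun A → ℂ) : Prop :=
  (∀ σ τ ρ : BSEfun A, (ρ : BoundedContinuousFunction (WeakDual.characterSpace ℂ A) ℂ) =
      ↑σ + ↑τ → χ ρ = χ σ + χ τ) ∧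
  (∀ (c : ℂ) (σ ρ : BSEfun A),
    (ρ : BoundedContinuousFunction (WeakDual.characterSpace ℂ A) ℂ) = c • ↑σ →
      χ ρ = c * χ σ) ∧
  (∀ σ τ ρ : BSEfun A, (ρ : BoundedContinuousFunction (WeakDual.characterSpace ℂ A) ℂ) =
      ↑σ * ↑τ → χ ρ = χ σ * χ τ) ∧
  (∃ σ : BSEfun A, χ σ ≠ 0) ∧
  (∃ K : ℝ, ∀ σ : BSEfun A,
    ‖χ σ‖ ≤ K * bseNorm (⇑(σ : BoundedContinuousFunction (WeakDual.characterSpace ℂ A) ℂ)))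

variable (A) in
/-- The character space `Δ(C_BSE(Δ(A)))`, as a set of functionals carrying the topology of
pointwise (weak-*) convergence. -/
def bseCharSet : Set (BSEfun A → ℂ) := {χ | IsBSECharacter χ}

/-- The evaluation character `f_φ : C_BSE(Δ(A)) → ℂ`, `f_φ(σ) = σ(φ)`. -/
noncomputable def evalBSE (φ : WeakDual.characterSpace ℂ A) : BSEfun A → ℂ :=
  fun σ => (σ : BoundedContinuousFunction (WeakDual.characterSpace ℂ A) ℂ) φ

variable (A) in
/-- The character space of `A` viewed as a subset of the dual `A*` (weak-* topology). -/
def charSet : Set (WeakDual ℂ A) :=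
  Set.range ((↑) : WeakDual.characterSpace ℂ A → WeakDual ℂ A)

-- Auxiliary lemmas

set_option linter.unusedSectionVars false

omit [CompleteSpace A] in
lemma char_apply_norm_le' (φ : WeakDual.characterSpace ℂ A) (a : A) : ‖φ a‖ ≤ ‖a‖ := by
  by_contra h
  push_neg at h
  have ha : 0 < ‖a‖ := by
    rcases (norm_nonneg a).lt_or_eq with h0 | h0
    · exact h0
    · exfalso
      have : a = 0 := by rwa [eq_comm, norm_eq_zero] at h0
      rw [this, map_zero, norm_zero] at h
      simp at h
  set t : ℝ := ‖φ a‖ / ‖a‖ with ht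
  have ht1 : 1 < t := (one_lt_div ha).2 h
  have key : ∀ n : ℕ, ∃ b : A, φ b = (φ a) ^ (n + 1) ∧ ‖b‖ ≤ ‖a‖ ^ (n + 1) := by
    intro n
    induction n with
    | zero => exact ⟨a, by simp, by simp⟩
    | succ k ih =>
      obtain ⟨b, hb1, hb2⟩ := ih
      refine ⟨a * b, ?_, ?_⟩
      · rw [map_mul, hb1, pow_succ]; ring
      · calc ‖a * b‖ ≤ ‖a‖ * ‖b‖ := norm_mul_le a b
          _ ≤ ‖a‖ * ‖a‖ ^ (k + 1) := mul_le_mul_of_nonneg_left hb2 (norm_nonneg a)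
          _ = ‖a‖ ^ (k + 1 + 1) := by ring
  set M : ℝ := ‖WeakDual.toStrongDual (φ : WeakDual ℂ A)‖ with hM
  have hbound : ∀ n : ℕ, t ^ (n + 1) ≤ M := by
    intro n
    obtain ⟨b, hb1, hb2⟩ := key n
    have h1 : ‖φ a‖ ^ (n + 1) ≤ M * ‖a‖ ^ (n + 1) := by
      calc ‖φ a‖ ^ (n + 1) = ‖φ b‖ := by rw [hb1, norm_pow]
        _ ≤ M * ‖b‖ := ContinuousLinearMap.le_opNorm _ b
        _ ≤ M * ‖a‖ ^ (n + 1) := mul_le_mul_of_nonneg_left hb2 (norm_nonneg _)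
    rw [ht, div_pow, div_le_iff₀ (by positivity)]
    linarith
  obtain ⟨n, hn⟩ := pow_unbounded_of_one_lt M ht1
  have := hbound n
  have h2 : t ^ n ≤ t ^ (n + 1) := pow_le_pow_right₀ ht1.le (by omega)
  linarith

omit [CompleteSpace A] in
lemma char_opNorm_le_one' (φ : WeakDual.characterSpace ℂ A) :
    ‖WeakDual.toStrongDual (φ : WeakDual ℂ A)‖ ≤ 1 :=
  ContinuousLinearMap.opNorm_le_bound _ zero_le_one fun a => by
    simpa using char_apply_norm_le' φ a

omit [CompleteSpace A] in
lemma apply_le_bseNorm' (σ : BSEfun A) (φ : WeakDual.characterSpace ℂ A) :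
    ‖(σ : BoundedContinuousFunction (WeakDual.characterSpace ℂ A) ℂ) φ‖ ≤
      bseNorm (⇑(σ : BoundedContinuousFunction (WeakDual.characterSpace ℂ A) ℂ)) := by
  obtain ⟨C₀, hC₀, hC₀'⟩ := σ.2
  refine le_csInf ⟨C₀, hC₀, hC₀'⟩ ?_
  rintro C ⟨hC0, hC⟩
  have h1 := hC 1 (fun _ => φ) (fun _ => 1)
  simp only [Fin.sum_univ_one, one_mul, one_smul] at h1
  calc ‖(σ : BoundedContinuousFunction (WeakDual.characterSpace ℂ A) ℂ) φ‖
      ≤ C * ‖WeakDual.toStrongDual (φ : WeakDual ℂ A)‖ := h1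
    _ ≤ C * 1 := mul_le_mul_of_nonneg_left (char_opNorm_le_one' φ) hC0.le
    _ = C := mul_one C

omit [CompleteSpace A] in
lemma isBSE_one'
    (hbwai : ∃ (ι : Type) (P : Preorder ι), Nonempty ι ∧
      IsDirected ι (fun a b => P.le a b) ∧
      ∃ (x : ι → A) (β : ℝ), (∀ i, ‖x i‖ ≤ β) ∧
        ∀ φ : WeakDual.characterSpace ℂ A,
          Filter.Tendsto (fun i => φ (x i)) (@Filter.atTop ι P) (nhds (1 : ℂ))) :
    IsBSE (⇑(1 : BoundedContinuousFunction (WeakDual.characterSpace ℂ A) ℂ)) := by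
  obtain ⟨ι, P, hne, hdir, x, β, hβ, htend⟩ := hbwai
  letI := P
  haveI : (atTop : Filter ι).NeBot := atTop_neBot_iff.2 ⟨hne, hdir⟩
  refine ⟨max β 1, lt_of_lt_of_le one_pos (le_max_right _ _), ?_⟩
  intro n φ c
  set F : WeakDual ℂ A := ∑ i, c i • ((φ i : WeakDual ℂ A)) with hF
  have happ : ∀ j, F (x j) = ∑ i, c i * (φ i) (x j) := by
    intro j
    show (WeakDual.toStrongDual F) (x j) = _
    rw [hF, map_sum, ContinuousLinearMap.sum_apply]; rfl
  have hlim : Tendsto (fun j => F (x j)) atTop (nhds (∑ i, c i)) := by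
    simp only [happ]
    have : Tendsto (fun j => ∑ i, c i * (φ i) (x j)) atTop (nhds (∑ i, c i * 1)) :=
      tendsto_finset_sum _ (fun i _ => (tendsto_const_nhds.mul (htend (φ i))))
    simpa using this
  have hnorm : Tendsto (fun j => ‖F (x j)‖) atTop (nhds ‖∑ i, c i‖) := hlim.norm
  have hbd : ∀ j, ‖F (x j)‖ ≤ max β 1 * ‖WeakDual.toStrongDual F‖ := by
    intro j
    calc ‖F (x j)‖ ≤ ‖WeakDual.toStrongDual F‖ * ‖x j‖ := ContinuousLinearMap.le_opNorm _ _
      _ ≤ ‖WeakDual.toStrongDual F‖ * max β 1 :=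
          mul_le_mul_of_nonneg_left ((hβ j).trans (le_max_left _ _)) (norm_nonneg _)
      _ = max β 1 * ‖WeakDual.toStrongDual F‖ := mul_comm _ _
  have := le_of_tendsto hnorm (Eventually.of_forall hbd)
  simpa using this

/-- if `A` has a bounded weak approximate identity and `C_BSE(Δ(A))` is an
ideal of `C_b(Δ(A))`, then the character space of `C_BSE(Δ(A))` equals the weak-* closure
of `Δ(A)` (embedded via the evaluation characters `f_φ`). -/
theorem bseCharSet_eq_closure
    (hss : ∀ a : A, (∀ φ : WeakDual.characterSpace ℂ A, φ a = 0) → a = 0)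
    (hbwai : ∃ (ι : Type) (P : Preorder ι), Nonempty ι ∧
      IsDirected ι (fun a b => P.le a b) ∧
      ∃ (x : ι → A) (β : ℝ), (∀ i, ‖x i‖ ≤ β) ∧
        ∀ φ : WeakDual.characterSpace ℂ A,
          Filter.Tendsto (fun i => φ (x i)) (@Filter.atTop ι P) (nhds (1 : ℂ)))
    (hIdeal : ∀ f σ : BoundedContinuousFunction (WeakDual.characterSpace ℂ A) ℂ,
      IsBSE (⇑σ) → IsBSE (⇑(f * σ))) :
    bseCharSet A = closure (Set.range (evalBSE (A := A))) := by
  classical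
  have hone : IsBSE (⇑(1 : BoundedContinuousFunction (WeakDual.characterSpace ℂ A) ℂ)) :=
    isBSE_one' hbwai
  have hall : ∀ f : BoundedContinuousFunction (WeakDual.characterSpace ℂ A) ℂ, IsBSE (⇑f) := by
    intro f
    have := hIdeal f 1 hone
    rwa [mul_one] at this
  set S : Set (BSEfun A → ℂ) := Set.range (evalBSE (A := A)) with hS
  ext χ
  constructor
  · -- hard direction: a BSE character lies in the closure of evaluations
    intro hχ
    obtain ⟨hadd0, hsmul0, hmul0, ⟨σ₀, hσ₀⟩, -⟩ := hχ
    set χ' : BoundedContinuousFunction (WeakDual.characterSpace ℂ A) ℂ → ℂ :=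
      fun f => χ ⟨f, hall f⟩ with hχ'
    have hkey : ∀ σ : BSEfun A, χ σ = χ' ↑σ := by
      intro σ
      exact congrArg χ (Subtype.ext rfl)
    have hadd : ∀ f g, χ' (f + g) = χ' f + χ' g := fun f g =>
      hadd0 ⟨f, hall f⟩ ⟨g, hall g⟩ ⟨f + g, hall _⟩ rfl
    have hsmul : ∀ (c : ℂ) f, χ' (c • f) = c * χ' f := fun c f =>
      hsmul0 c ⟨f, hall f⟩ ⟨c • f, hall _⟩ rfl
    have hmul : ∀ f g, χ' (f * g) = χ' f * χ' g := fun f g =>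
      hmul0 ⟨f, hall f⟩ ⟨g, hall g⟩ ⟨f * g, hall _⟩ rfl
    have hone1 : χ' 1 = 1 := by
      have h := hmul ↑σ₀ 1
      rw [mul_one] at h
      have hχσ₀ : χ' ↑σ₀ ≠ 0 := by rw [← hkey]; exact hσ₀
      exact (mul_left_cancel₀ hχσ₀ (by rw [← h, mul_one])).symm
    by_contra hc
    obtain ⟨I, u, h1, h2⟩ := (isOpen_pi_iff.1 (isClosed_closure (s := S)).isOpen_compl) χ hc
    -- radii
    have hεex : ∀ σ : BSEfun A, ∃ ε : ℝ, 0 < ε ∧ (σ ∈ I → Metric.ball (χ σ) ε ⊆ u σ) := by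
      intro σ
      by_cases hσ : σ ∈ I
      · obtain ⟨ε, hε, hb⟩ := Metric.isOpen_iff.1 (h1 σ hσ).1 _ (h1 σ hσ).2
        exact ⟨ε, hε, fun _ => hb⟩
      · exact ⟨1, one_pos, fun h => absurd h hσ⟩
    choose ε hεpos hball using hεex
    have hnotin : ∀ φ : WeakDual.characterSpace ℂ A, ∃ σ ∈ I,
        ε σ ≤ ‖(σ : BoundedContinuousFunction (WeakDual.characterSpace ℂ A) ℂ) φ - χ σ‖ := by
      intro φ
      have hmem : evalBSE φ ∈ closure S := subset_closure ⟨φ, rfl⟩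
      have : evalBSE φ ∉ Set.pi ↑I u := fun h => (h2 h) hmem
      rw [Set.mem_pi] at this
      push_neg at this
      obtain ⟨σ, hσI, hσu⟩ := this
      refine ⟨σ, hσI, ?_⟩
      by_contra hlt
      push_neg at hlt
      exact hσu (hball σ hσI (by rwa [Metric.mem_ball, dist_eq_norm]))
    -- the function g
    set h : BSEfun A → BoundedContinuousFunction (WeakDual.characterSpace ℂ A) ℂ :=
      fun σ => ↑σ - χ σ • 1 with hh
    set g : BoundedContinuousFunction (WeakDual.characterSpace ℂ A) ℂ :=
      ∑ σ ∈ I, ((ε σ : ℂ) ^ 2)⁻¹ • (h σ * star (h σ)) with hg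
    have hχ'h : ∀ σ : BSEfun A, χ' (h σ) = 0 := by
      intro σ
      have hrep : h σ = ↑σ + (-(χ σ)) • 1 := by
        rw [hh]; simp [sub_eq_add_neg, neg_smul]
      rw [hrep, hadd, hsmul, hone1, ← hkey]
      ring
    have hχ'g : χ' g = 0 := by
      have hmap : χ' g = ∑ σ ∈ I, χ' (((ε σ : ℂ) ^ 2)⁻¹ • (h σ * star (h σ))) := by
        rw [hg]
        exact map_sum (AddMonoidHom.mk' χ' hadd) _ I
      rw [hmap]
      refine Finset.sum_eq_zero fun σ _ => ?_
      rw [hsmul, hmul, hχ'h]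
      ring
    -- lower bound for g
    have hglb : ∀ φ : WeakDual.characterSpace ℂ A, 1 ≤ ‖g φ‖ := by
      intro φ
      have hgval : g φ = ((∑ σ ∈ I, (ε σ ^ 2)⁻¹ *
          ‖(σ : BoundedContinuousFunction (WeakDual.characterSpace ℂ A) ℂ) φ - χ σ‖ ^ 2 : ℝ) : ℂ) := by
        rw [hg]
        push_cast
        rw [BoundedContinuousFunction.coe_sum, Finset.sum_apply]
        refine Finset.sum_congr rfl fun σ _ => ?_
        have happ : (h σ) φ =
            (σ : BoundedContinuousFunction (WeakDual.characterSpace ℂ A) ℂ) φ - χ σ := by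
          simp [hh]
        simp only [BoundedContinuousFunction.coe_smul, Pi.smul_apply,
          BoundedContinuousFunction.coe_mul, Pi.mul_apply,
          BoundedContinuousFunction.coe_star, Pi.star_apply, happ, smul_eq_mul]
        rw [show (star ((σ : BoundedContinuousFunction (WeakDual.characterSpace ℂ A) ℂ) φ - χ σ)) =
          starRingEnd ℂ ((σ : BoundedContinuousFunction (WeakDual.characterSpace ℂ A) ℂ) φ - χ σ) from rfl]
        rw [Complex.mul_conj]
        congr 1
        norm_cast
        rw [Complex.normSq_eq_norm_sq]
      rw [hgval, Complex.norm_real]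
      obtain ⟨σS, hσI, hσge⟩ := hnotin φ
      have hterm : 1 ≤ (ε σS ^ 2)⁻¹ *
          ‖(σS : BoundedContinuousFunction (WeakDual.characterSpace ℂ A) ℂ) φ - χ σS‖ ^ 2 := by
        have hε2 : 0 < ε σS ^ 2 := pow_pos (hεpos σS) 2
        rw [le_inv_mul_iff₀ hε2, mul_one]
        exact pow_le_pow_left₀ (hεpos σS).le hσge 2
      have hsum : (ε σS ^ 2)⁻¹ *
            ‖(σS : BoundedContinuousFunction (WeakDual.characterSpace ℂ A) ℂ) φ - χ σS‖ ^ 2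
          ≤ ∑ σ ∈ I, (ε σ ^ 2)⁻¹ *
            ‖(σ : BoundedContinuousFunction (WeakDual.characterSpace ℂ A) ℂ) φ - χ σ‖ ^ 2 :=
        Finset.single_le_sum
          (f := fun σ => (ε σ ^ 2)⁻¹ *
            ‖(σ : BoundedContinuousFunction (WeakDual.characterSpace ℂ A) ℂ) φ - χ σ‖ ^ 2)
          (fun σ _ => by positivity) hσI
      calc (1 : ℝ) ≤ _ := hterm
        _ ≤ _ := hsum
        _ ≤ |_| := le_abs_self _
    have hgne : ∀ φ, g φ ≠ 0 := by
      intro φ hz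
      have := hglb φ
      rw [hz, norm_zero] at this
      linarith
    -- inverse of g
    set gInv : BoundedContinuousFunction (WeakDual.characterSpace ℂ A) ℂ :=
      BoundedContinuousFunction.ofNormedAddCommGroup (fun φ => (g φ)⁻¹)
        (g.continuous.inv₀ hgne) 1
        (fun φ => by
          rw [norm_inv]
          exact inv_le_one_of_one_le₀ (hglb φ)) with hgInv
    have hmulinv : g * gInv = 1 := by
      ext φ
      simp only [BoundedContinuousFunction.coe_mul, Pi.mul_apply, hgInv,
        BoundedContinuousFunction.coe_ofNormedAddCommGroup, BoundedContinuousFunction.coe_one,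
        Pi.one_apply]
      exact mul_inv_cancel₀ (hgne φ)
    have : (1 : ℂ) = 0 := by
      calc (1 : ℂ) = χ' 1 := hone1.symm
        _ = χ' (g * gInv) := by rw [hmulinv]
        _ = χ' g * χ' gInv := hmul g gInv
        _ = 0 := by rw [hχ'g, zero_mul]
    exact one_ne_zero this
  · -- easy direction: elements of the closure are BSE characters
    intro hχ
    have hsub : ∀ (T : Set (BSEfun A → ℂ)), IsClosed T → S ⊆ T → χ ∈ T := by
      intro T hT hST
      exact closure_minimal hST hT hχ
    refine ⟨?_, ?_, ?_, ?_, ⟨1, ?_⟩⟩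
    · intro σ τ ρ hrel
      refine hsub {χ | χ ρ = χ σ + χ τ}
        (isClosed_eq (continuous_apply ρ) ((continuous_apply σ).add (continuous_apply τ))) ?_
      rintro _ ⟨φ, rfl⟩
      show (ρ : BoundedContinuousFunction (WeakDual.characterSpace ℂ A) ℂ) φ = _
      rw [hrel]
      rfl
    · intro c σ ρ hrel
      refine hsub {χ | χ ρ = c * χ σ}
        (isClosed_eq (continuous_apply ρ) (continuous_const.mul (continuous_apply σ))) ?_
      rintro _ ⟨φ, rfl⟩
      show (ρ : BoundedContinuousFunction (WeakDual.characterSpace ℂ A) ℂ) φ = _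
      rw [hrel]
      rfl
    · intro σ τ ρ hrel
      refine hsub {χ | χ ρ = χ σ * χ τ}
        (isClosed_eq (continuous_apply ρ) ((continuous_apply σ).mul (continuous_apply τ))) ?_
      rintro _ ⟨φ, rfl⟩
      show (ρ : BoundedContinuousFunction (WeakDual.characterSpace ℂ A) ℂ) φ = _
      rw [hrel]
      rfl
    · refine ⟨⟨1, hall 1⟩, ?_⟩
      have : χ ⟨1, hall 1⟩ = 1 := by
        refine hsub {χ | χ ⟨1, hall 1⟩ = 1}
          (isClosed_eq (continuous_apply _) continuous_const) ?_
        rintro _ ⟨φ, rfl⟩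
        show ((1 : BoundedContinuousFunction (WeakDual.characterSpace ℂ A) ℂ)) φ = 1
        simp
      rw [this]
      exact one_ne_zero
    · intro σ
      refine hsub {χ | ‖χ σ‖ ≤ 1 * bseNorm
          (⇑(σ : BoundedContinuousFunction (WeakDual.characterSpace ℂ A) ℂ))}
        (isClosed_le ((continuous_apply σ).norm) continuous_const) ?_
      rintro _ ⟨φ, rfl⟩
      show ‖(σ : BoundedContinuousFunction (WeakDual.characterSpace ℂ A) ℂ) φ‖ ≤ _
      rw [one_mul]
      exact apply_le_bseNorm' σ φ
end
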